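/- The quantum amplitude estimation error bound satisfies: if |θ̂ − θ| ≤ π/M with a = sin²(θ) and â = sin²(θ̂), θ, θ̂ ∈ [0, π/2], then |â − a| ≤ 2π√(a(1−a))/M + π²/M². -/

import Mathlib

/-- Conversion of phase-estimation error to amplitude error in QAE: if
`|θ̂ − θ| ≤ π/M` with `a = sin²θ`, `â = sin²θ̂`, `θ, θ̂ ∈ [0, π/2]`, then
`|â − a| ≤ 2π√(a(1−a))/M + π²/M²`. -/
theorem qae_amplitude_error (θ θh : ℝ)
    (hθ : θ ∈ Set.Icc 0 (Real.pi / 2)) (hθh : θh ∈ Set.Icc 0 (Real.pi / 2))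
    (M : ℕ) (hM : 1 ≤ M) (h : |θh - θ| ≤ Real.pi / M) :
    |Real.sin θh ^ 2 - Real.sin θ ^ 2|
      ≤ 2 * Real.pi * Real.sqrt (Real.sin θ ^ 2 * (1 - Real.sin θ ^ 2)) / M
        + Real.pi ^ 2 / (M : ℝ) ^ 2 := by
  obtain ⟨h0, h1⟩ := hθ
  obtain ⟨h0', h1'⟩ := hθh
  have hMpos : (0:ℝ) < M := by exact_mod_cast hM
  have hπM : 0 < Real.pi / M := div_pos Real.pi_pos hMpos
  set δ := θh - θ with hδ
  have hsθ : 0 ≤ Real.sin θ := Real.sin_nonneg_of_nonneg_of_le_pi h0 (by linarith [Real.pi_pos])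
  have hcθ : 0 ≤ Real.cos θ := Real.cos_nonneg_of_mem_Icc ⟨by linarith [Real.pi_pos], h1⟩
  -- sqrt simplification
  have hsub : 1 - Real.sin θ ^ 2 = Real.cos θ ^ 2 := by
    have := Real.sin_sq_add_cos_sq θ; linarith
  have hsqrt : Real.sqrt (Real.sin θ ^ 2 * (1 - Real.sin θ ^ 2))
      = Real.sin θ * Real.cos θ := by
    rw [hsub, ← mul_pow, Real.sqrt_sq (mul_nonneg hsθ hcθ)]
  rw [hsqrt]
  -- key identity
  have key : Real.sin θh ^ 2 - Real.sin θ ^ 2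
      = Real.sin (θh + θ) * Real.sin δ := by
    rw [Real.sin_add, hδ, Real.sin_sub]
    have hs2 := Real.sin_sq_add_cos_sq θ
    have hs2' := Real.sin_sq_add_cos_sq θh
    ring_nf
    nlinarith [hs2, hs2']
  have habsδ : |Real.sin δ| ≤ Real.pi / M := by
    calc |Real.sin δ| ≤ |δ| := Real.abs_sin_le_abs
    _ ≤ Real.pi / M := h
  have hsum : |Real.sin (θh + θ)| ≤ Real.sin (2*θ) + Real.pi / M := by
    have hsin2θ : 0 ≤ Real.sin (2*θ) := by
      apply Real.sin_nonneg_of_nonneg_of_le_pi <;> linarith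
    have : θh + θ = 2*θ + δ := by rw [hδ]; ring
    rw [this, Real.sin_add]
    have hc1 : |Real.cos δ| ≤ 1 := Real.abs_cos_le_one δ
    have hc2 : |Real.cos (2*θ)| ≤ 1 := Real.abs_cos_le_one _
    calc |Real.sin (2*θ) * Real.cos δ + Real.cos (2*θ) * Real.sin δ|
        ≤ |Real.sin (2*θ) * Real.cos δ| + |Real.cos (2*θ) * Real.sin δ| := abs_add_le _ _
      _ = |Real.sin (2*θ)| * |Real.cos δ| + |Real.cos (2*θ)| * |Real.sin δ| := by
          rw [abs_mul, abs_mul]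
      _ ≤ Real.sin (2*θ) * 1 + 1 * (Real.pi / M) := by
          rw [abs_of_nonneg hsin2θ]
          gcongr
      _ = Real.sin (2*θ) + Real.pi / M := by ring
  have hsin2 : Real.sin (2*θ) = 2 * Real.sin θ * Real.cos θ := Real.sin_two_mul θ
  calc |Real.sin θh ^ 2 - Real.sin θ ^ 2|
      = |Real.sin (θh + θ)| * |Real.sin δ| := by rw [key, abs_mul]
    _ ≤ (Real.sin (2*θ) + Real.pi / M) * (Real.pi / M) := by
        have hsin2θ : 0 ≤ Real.sin (2*θ) := by
          apply Real.sin_nonneg_of_nonneg_of_le_pi <;> linarith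
        have := abs_nonneg (Real.sin (θh+θ))
        exact mul_le_mul hsum habsδ (abs_nonneg _) (by linarith)
    _ = 2 * Real.pi * (Real.sin θ * Real.cos θ) / M + Real.pi ^ 2 / (M:ℝ)^2 := by
        rw [hsin2]; field_simp
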